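/- For all t, d ∈ ℝ, every sequence (s_n) of positive reals converging to 0, and every sequence (d_n) of reals converging to d, the quotients (a(t + s_n d_n) − a(t))/s_n converge to a'(t;d), where a'(t;d) equals a₀'(t)·d if t < t̄; a₁'(t)·d if t > t̄; a₁'(t̄)·d if t = t̄ and d > 0; a₀'(t̄)·d if t = t̄ and d < 0; and 0 if d = 0. -/

import Mathlib

open Real Filter

lemma key_dirderiv (f : ℝ → ℝ) {f' t : ℝ} (hf : HasDerivAt f f' t)
    (s dn : ℕ → ℝ) (hs : ∀ n, 0 < s n) (hs0 : Tendsto s atTop (nhds 0))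
    {d : ℝ} (hdn : Tendsto dn atTop (nhds d)) :
    Tendsto (fun n => (f (t + s n * dn n) - f t) / s n) atTop (nhds (f' * d)) := by
  have hg : Tendsto (fun n => t + s n * dn n) atTop (nhds t) := by
    have h := hs0.mul hdn
    rw [zero_mul] at h
    simpa using tendsto_const_nhds.add h
  have h1 := (hasDerivAt_iff_isLittleO.mp hf).comp_tendsto hg
  have h2 : (fun n => t + s n * dn n - t) =O[atTop] s := by
    have hb : dn =O[atTop] (fun _ => (1:ℝ)) := hdn.isBigO_one ℝ
    have := (Asymptotics.isBigO_refl s atTop).mul hb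
    simpa using this
  have h3 := (h1.trans_isBigO h2).tendsto_div_nhds_zero
  have h4 : Tendsto (fun n => dn n * f') atTop (nhds (d * f')) :=
    hdn.mul_const f'
  have h5 := h3.add h4
  rw [zero_add] at h5
  rw [mul_comm f' d]
  refine h5.congr fun n => ?_
  have hsn := (hs n).ne'
  field_simp
  simp only [Function.comp_apply]
  ring

/-- Let `a₀, a₁ : ℝ → ℝ` be `C¹` with `a₀ t̄ = a₁ t̄`, and let
`a t = a₀ t` for `t ≤ t̄` and `a t = a₁ t` for `t > t̄`.
For all `t, d ∈ ℝ`, every sequence `(s_n)` of positive reals converging to `0` and every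
sequence `(d_n)` converging to `d`, the quotients `(a(t + s_n d_n) − a(t))/s_n` converge to
the directional derivative `a'(t; d)`, given by `a₀'(t) d` if `t < t̄`; `a₁'(t) d` if
`t > t̄`; `a₁'(t̄) d` if `t = t̄, d > 0`; `a₀'(t̄) d` if `t = t̄, d < 0`; and `0` if `d = 0`. -/
theorem stmt12 (tbar : ℝ) (a₀ a₁ : ℝ → ℝ)
    (h₀ : ContDiff ℝ 1 a₀) (h₁ : ContDiff ℝ 1 a₁) (hval : a₀ tbar = a₁ tbar)
    (t d : ℝ) (s : ℕ → ℝ) (hs : ∀ n, 0 < s n)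
    (hs0 : Filter.Tendsto s Filter.atTop (nhds 0))
    (dn : ℕ → ℝ) (hdn : Filter.Tendsto dn Filter.atTop (nhds d)) :
    Filter.Tendsto
      (fun n : ℕ =>
        ((if t + s n * dn n ≤ tbar then a₀ (t + s n * dn n) else a₁ (t + s n * dn n))
          - (if t ≤ tbar then a₀ t else a₁ t)) / s n)
      Filter.atTop
      (nhds (if t < tbar then deriv a₀ t * d
             else if tbar < t then deriv a₁ t * d
             else if 0 < d then deriv a₁ tbar * d
             else if d < 0 then deriv a₀ tbar * d
             else 0)) := by
  have hd₀ : ∀ x : ℝ, HasDerivAt a₀ (deriv a₀ x) x := fun x =>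
    ((h₀.differentiable one_ne_zero) x).hasDerivAt
  have hd₁ : ∀ x : ℝ, HasDerivAt a₁ (deriv a₁ x) x := fun x =>
    ((h₁.differentiable one_ne_zero) x).hasDerivAt
  have hg : Tendsto (fun n => t + s n * dn n) atTop (nhds t) := by
    have h := hs0.mul hdn
    rw [zero_mul] at h
    simpa using tendsto_const_nhds.add h
  rcases lt_trichotomy t tbar with hlt | heq | hgt
  · -- t < tbar
    rw [if_pos hlt]
    have hev : ∀ᶠ n in atTop, t + s n * dn n ≤ tbar :=
      (hg.eventually_lt_const hlt).mono fun n h => h.le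
    refine (key_dirderiv a₀ (hd₀ t) s dn hs hs0 hdn).congr' ?_
    filter_upwards [hev] with n hn
    rw [if_pos hn, if_pos hlt.le]
  · -- t = tbar
    subst heq
    rw [if_neg (lt_irrefl t), if_neg (lt_irrefl t), if_pos le_rfl]
    rcases lt_trichotomy d 0 with hd | hd | hd
    · -- d < 0 : eventually dn n < 0, so t + s n * dn n < t
      rw [if_neg (not_lt.mpr hd.le), if_pos hd]
      have hev : ∀ᶠ n in atTop, dn n < 0 := hdn.eventually_lt_const hd
      refine (key_dirderiv a₀ (hd₀ t) s dn hs hs0 hdn).congr' ?_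
      filter_upwards [hev] with n hn
      have : t + s n * dn n ≤ t := by nlinarith [hs n]
      rw [if_pos this]
    · -- d = 0
      subst hd
      rw [if_neg (lt_irrefl 0), if_neg (lt_irrefl 0)]
      have hA := key_dirderiv a₀ (hd₀ t) s dn hs hs0 hdn
      have hB := key_dirderiv a₁ (hd₁ t) s dn hs hs0 hdn
      rw [mul_zero] at hA hB
      have hAB : Tendsto (fun n => |(a₀ (t + s n * dn n) - a₀ t) / s n|
          + |(a₁ (t + s n * dn n) - a₁ t) / s n|) atTop (nhds 0) := by
        have := (hA.abs.add hB.abs)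
        simpa using this
      refine squeeze_zero_norm (fun n => ?_) hAB
      by_cases h : t + s n * dn n ≤ t
      · rw [if_pos h]
        calc ‖(a₀ (t + s n * dn n) - a₀ t) / s n‖
            ≤ |(a₀ (t + s n * dn n) - a₀ t) / s n| := le_rfl
          _ ≤ _ := le_add_of_nonneg_right (abs_nonneg _)
      · rw [if_neg h, hval]
        calc ‖(a₁ (t + s n * dn n) - a₁ t) / s n‖
            ≤ |(a₁ (t + s n * dn n) - a₁ t) / s n| := le_rfl
          _ ≤ _ := le_add_of_nonneg_left (abs_nonneg _)
    · -- 0 < d : eventually dn n > 0, so t + s n * dn n > t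
      rw [if_pos hd]
      have hev : ∀ᶠ n in atTop, 0 < dn n := hdn.eventually_const_lt hd
      have h' := key_dirderiv a₁ (hd₁ t) s dn hs hs0 hdn
      refine h'.congr' ?_
      filter_upwards [hev] with n hn
      have : ¬ t + s n * dn n ≤ t := by nlinarith [hs n]
      rw [if_neg this, hval]
  · -- tbar < t
    rw [if_neg (not_lt.mpr hgt.le), if_pos hgt]
    have hev : ∀ᶠ n in atTop, tbar < t + s n * dn n := hg.eventually_const_lt hgt
    refine (key_dirderiv a₁ (hd₁ t) s dn hs hs0 hdn).congr' ?_
    filter_upwards [hev] with n hn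
    rw [if_neg (not_le.mpr hn), if_neg (not_le.mpr hgt)]
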